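/- The number of S-permutation matrices of size n²×n² equals (n!)^{2n}. -/

import Mathlib

/-- The index `s*n + k` of the `n² × n²` matrix corresponding to block
coordinate `s` and within-block coordinate `k`. -/
def idx (n : ℕ) (s k : Fin n) : Fin (n ^ 2) :=
  ⟨s.val * n + k.val, by
    have hs := s.isLt
    have hk := k.isLt
    rw [pow_two]
    nlinarith⟩

/-- A matrix is binary if all its entries are `0` or `1`. -/
def Binary01 {α β : Type*} (A : α → β → ℕ) : Prop :=
  ∀ i j, A i j = 0 ∨ A i j = 1

/-- An S-permutation matrix: a binary `n² × n²` permutation matrix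
(exactly one `1` in every row and every column) such that each `n × n`
block `A_{st}` (rows `sn,…,sn+n−1`, columns `tn,…,tn+n−1`) contains
exactly one entry equal to `1`. -/
def IsSPerm (n : ℕ) (A : Fin (n ^ 2) → Fin (n ^ 2) → ℕ) : Prop :=
  Binary01 A ∧
  (∀ i, ∃! j, A i j = 1) ∧
  (∀ j, ∃! i, A i j = 1) ∧
  (∀ s t : Fin n, ∃! kl : Fin n × Fin n, A (idx n s kl.1) (idx n t kl.2) = 1)

open Equiv

lemma npos {n : ℕ} (i : Fin (n ^ 2)) : 0 < n := by
  rcases Nat.eq_zero_or_pos n with h | h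
  · exact absurd i.isLt (by simp [h])
  · exact h

def blk {n : ℕ} (i : Fin (n ^ 2)) : Fin n :=
  ⟨i.val / n, (Nat.div_lt_iff_lt_mul (npos i)).2 (by rw [← pow_two]; exact i.isLt)⟩

def pos {n : ℕ} (i : Fin (n ^ 2)) : Fin n :=
  ⟨i.val % n, Nat.mod_lt _ (npos i)⟩

lemma idx_blk_pos {n : ℕ} (i : Fin (n ^ 2)) : idx n (blk i) (pos i) = i := by
  apply Fin.ext
  show i.val / n * n + i.val % n = i.val
  rw [Nat.mul_comm]
  exact Nat.div_add_mod _ _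

lemma blk_idx {n : ℕ} (s k : Fin n) : blk (idx n s k) = s := by
  apply Fin.ext
  show (s.val * n + k.val) / n = s.val
  rw [Nat.mul_comm, Nat.mul_add_div (npos (idx n s k)), Nat.div_eq_of_lt k.isLt]
  omega

lemma pos_idx {n : ℕ} (s k : Fin n) : pos (idx n s k) = k := by
  apply Fin.ext
  show (s.val * n + k.val) % n = k.val
  rw [Nat.add_mod, Nat.mul_mod_left]
  simp [Nat.mod_eq_of_lt k.isLt]

lemma idx_inj {n : ℕ} {s k t l : Fin n} (h : idx n s k = idx n t l) : s = t ∧ k = l :=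
  ⟨by rw [← blk_idx s k, h, blk_idx], by rw [← pos_idx s k, h, pos_idx]⟩

/-- The map on indices determined by a pair of permutation families. -/
def Fmap {n : ℕ} (p : (Fin n → Perm (Fin n)) × (Fin n → Perm (Fin n)))
    (i : Fin (n ^ 2)) : Fin (n ^ 2) :=
  idx n (p.1 (blk i) (pos i)) (p.2 (p.1 (blk i) (pos i)) (blk i))

lemma Fmap_idx {n : ℕ} (p : (Fin n → Perm (Fin n)) × (Fin n → Perm (Fin n)))
    (s k : Fin n) : Fmap p (idx n s k) = idx n (p.1 s k) (p.2 (p.1 s k) s) := by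
  simp [Fmap, blk_idx, pos_idx]

lemma Fmap_inj {n : ℕ} (p : (Fin n → Perm (Fin n)) × (Fin n → Perm (Fin n))) :
    Function.Injective (Fmap p) := by
  intro i i' h
  rw [← idx_blk_pos i, ← idx_blk_pos i', Fmap_idx, Fmap_idx] at h
  obtain ⟨h1, h2⟩ := idx_inj h
  rw [h1] at h2
  have hs : blk i = blk i' := (p.2 _).injective h2
  rw [hs] at h1
  have hk : pos i = pos i' := (p.1 _).injective h1
  rw [← idx_blk_pos i, ← idx_blk_pos i', hs, hk]

lemma Fmap_bij {n : ℕ} (p : (Fin n → Perm (Fin n)) × (Fin n → Perm (Fin n))) :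
    Function.Bijective (Fmap p) :=
  Finite.injective_iff_bijective.1 (Fmap_inj p)

/-- Matrix associated to a pair of permutation families. -/
def Mmat {n : ℕ} (p : (Fin n → Perm (Fin n)) × (Fin n → Perm (Fin n)))
    (i j : Fin (n ^ 2)) : ℕ :=
  if j = Fmap p i then 1 else 0

lemma Mmat_eq_one {n : ℕ} {p : (Fin n → Perm (Fin n)) × (Fin n → Perm (Fin n))}
    {i j : Fin (n ^ 2)} : Mmat p i j = 1 ↔ j = Fmap p i := by
  unfold Mmat
  constructor
  · intro h
    by_contra hne
    rw [if_neg hne] at h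
    omega
  · intro h
    rw [if_pos h]

lemma Mmat_isSPerm {n : ℕ} (p : (Fin n → Perm (Fin n)) × (Fin n → Perm (Fin n))) :
    IsSPerm n (Mmat p) := by
  refine ⟨fun i j => ?_, fun i => ?_, fun j => ?_, fun s t => ?_⟩
  · unfold Mmat; split <;> simp
  · exact ⟨Fmap p i, Mmat_eq_one.2 rfl, fun j hj => Mmat_eq_one.1 hj⟩
  · obtain ⟨i, hi⟩ := (Fmap_bij p).2 j
    exact ⟨i, Mmat_eq_one.2 hi.symm, fun i' hi' =>
      (Fmap_bij p).1 ((Mmat_eq_one.1 hi').symm.trans hi.symm)⟩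
  · refine ⟨((p.1 s)⁻¹ t, p.2 t s), ?_, ?_⟩
    · show Mmat p (idx n s ((p.1 s)⁻¹ t)) (idx n t (p.2 t s)) = 1
      rw [Mmat_eq_one, Fmap_idx]
      simp
    · rintro ⟨k, l⟩ h
      simp only at h
      rw [Mmat_eq_one, Fmap_idx] at h
      obtain ⟨h1, h2⟩ := idx_inj h
      have hk : k = (p.1 s)⁻¹ t := by rw [h1]; simp
      have hl : l = p.2 t s := by rw [h2, ← h1]
      simp [Prod.ext_iff, hk, hl]

/-- The bijection from pairs of permutation families to S-permutation matrices. -/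
def Phi (n : ℕ) (p : (Fin n → Perm (Fin n)) × (Fin n → Perm (Fin n))) :
    {A : Fin (n ^ 2) → Fin (n ^ 2) → ℕ // IsSPerm n A} :=
  ⟨Mmat p, Mmat_isSPerm p⟩

lemma Phi_inj (n : ℕ) : Function.Injective (Phi n) := by
  rintro ⟨π, ρ⟩ ⟨π', ρ'⟩ h
  have hM : Mmat (π, ρ) = Mmat (π', ρ') := congrArg Subtype.val h
  have hF : ∀ i, Fmap (π, ρ) i = Fmap (π', ρ') i := by
    intro i
    have : Mmat (π, ρ) i (Fmap (π, ρ) i) = 1 := Mmat_eq_one.2 rfl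
    rw [hM] at this
    exact Mmat_eq_one.1 this
  have hπ : ∀ s k, π s k = π' s k ∧ ρ (π s k) s = ρ' (π s k) s := by
    intro s k
    have := hF (idx n s k)
    rw [Fmap_idx, Fmap_idx] at this
    obtain ⟨h1, h2⟩ := idx_inj this
    exact ⟨h1, by rw [h2, ← h1]⟩
  have hπ' : π = π' := by
    funext s; exact Equiv.ext fun k => (hπ s k).1
  have hρ : ρ = ρ' := by
    funext t; apply Equiv.ext; intro s
    have := (hπ s ((π s)⁻¹ t)).2
    simpa using this
  simp [Prod.ext_iff, hπ', hρ]

lemma Phi_surj (n : ℕ) : Function.Surjective (Phi n) := by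
  rintro ⟨A, hA⟩
  obtain ⟨hbin, hrow, hcol, hblock⟩ := id hA
  -- the underlying function
  choose f hf hf' using hrow
  have hA_iff : ∀ i j, A i j = 1 ↔ j = f i := by
    intro i j
    constructor
    · intro h; exact (hf' i j h)
    · rintro rfl; exact hf i
  have hf_inj : Function.Injective f := by
    intro i i' h
    obtain ⟨i₀, hi₀, hi₀'⟩ := hcol (f i)
    rw [hi₀' i (hf i), hi₀' i' (by rw [h]; exact hf i')]
  -- the block permutations
  have hπinj : ∀ s : Fin n, Function.Injective fun k => blk (f (idx n s k)) := by
    intro s k k' h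
    obtain ⟨kl, hkl, hkl'⟩ := hblock s (blk (f (idx n s k)))
    simp only at h
    have e1 : (k, pos (f (idx n s k))) = kl := by
      apply hkl'
      show A (idx n s k) (idx n (blk (f (idx n s k))) (pos (f (idx n s k)))) = 1
      rw [hA_iff]
      exact idx_blk_pos _
    have e2 : (k', pos (f (idx n s k'))) = kl := by
      apply hkl'
      show A (idx n s k') (idx n (blk (f (idx n s k))) (pos (f (idx n s k')))) = 1
      rw [hA_iff, h]
      exact idx_blk_pos _
    have := e1.trans e2.symm
    exact (Prod.ext_iff.1 this).1
  let π : Fin n → Perm (Fin n) := fun s =>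
    Equiv.ofBijective _ (Finite.injective_iff_bijective.1 (hπinj s))
  have hπ : ∀ s k, π s k = blk (f (idx n s k)) := fun s k => rfl
  have hρinj : ∀ t : Fin n, Function.Injective
      fun s => pos (f (idx n s ((π s)⁻¹ t))) := by
    intro t s s' h
    simp only at h
    have ht : ∀ s₀ : Fin n, blk (f (idx n s₀ ((π s₀)⁻¹ t))) = t := by
      intro s₀
      have := hπ s₀ ((π s₀)⁻¹ t)
      exact this.symm.trans (Equiv.apply_symm_apply (π s₀) t)
    have : f (idx n s ((π s)⁻¹ t)) = f (idx n s' ((π s')⁻¹ t)) := by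
      rw [← idx_blk_pos (f (idx n s ((π s)⁻¹ t))), ← idx_blk_pos (f (idx n s' ((π s')⁻¹ t))),
        ht s, ht s', h]
    have := hf_inj this
    exact (idx_inj this).1
  let ρ : Fin n → Perm (Fin n) := fun t =>
    Equiv.ofBijective _ (Finite.injective_iff_bijective.1 (hρinj t))
  have hρ : ∀ t s, ρ t s = pos (f (idx n s ((π s)⁻¹ t))) := fun t s => rfl
  refine ⟨(π, ρ), ?_⟩
  apply Subtype.ext
  funext i j
  show Mmat (π, ρ) i j = A i j
  have hF : Fmap (π, ρ) i = f i := by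
    rw [← idx_blk_pos i, Fmap_idx]
    have h1 : π (blk i) (pos i) = blk (f (idx n (blk i) (pos i))) := hπ _ _
    have h2 : ρ (π (blk i) (pos i)) (blk i) = pos (f (idx n (blk i) (pos i))) := by
      simp only [hρ, show (π (blk i))⁻¹ (π (blk i) (pos i)) = pos i from Equiv.symm_apply_apply _ _]
    show idx n (π (blk i) (pos i)) (ρ (π (blk i) (pos i)) (blk i)) = f (idx n (blk i) (pos i))
    rw [h2, h1]
    exact idx_blk_pos _
  rcases hbin i j with h0 | h1
  · have hj : j ≠ Fmap (π, ρ) i := by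
      rw [hF]
      intro hj
      have h1 := hf i
      simp only at h1
      rw [← hj] at h1
      omega
    rw [h0]
    unfold Mmat
    rw [if_neg hj]
  · rw [h1]
    unfold Mmat
    rw [if_pos]
    rw [hF]
    exact hA_iff i j |>.1 h1

/-- The number of S-permutation matrices of size `n² × n²`
equals `(n!)^(2n)`. -/
theorem card_SPerm (n : ℕ) (hn : 0 < n) :
    Nat.card {A : Fin (n ^ 2) → Fin (n ^ 2) → ℕ // IsSPerm n A} =
      (Nat.factorial n) ^ (2 * n) := by
  rw [← Nat.card_eq_of_bijective (Phi n) ⟨Phi_inj n, Phi_surj n⟩]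
  rw [Nat.card_prod, Nat.card_eq_fintype_card, Fintype.card_fun,
    Fintype.card_perm, Fintype.card_fin, two_mul, pow_add]
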